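/- For all real a > 0 and b > 0, ∫_0^∞ e^{−a t} · J_0(b t) dt = 1/√(a² + b²), where J_0(y) = ∑_{m=0}^∞ (−1)^m/(m!·Γ(m+1))·(y/2)^{2m}. -/

import Mathlib

open Real MeasureTheory

open Set Filter

/-- The Bessel function of the first kind of order 0, defined by its series. -/
noncomputable def besselJ0 (y : ℝ) : ℝ :=
  ∑' m : ℕ, (-1) ^ m / (m.factorial * Real.Gamma (m + 1)) * (y / 2) ^ (2 * m)


lemma laplace_cos (a c : ℝ) (ha : 0 < a) :
    ∫ t in Set.Ioi (0:ℝ), Real.exp (-a * t) * Real.cos (c * t) = a / (a ^ 2 + c ^ 2) := by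
  have hd : (0:ℝ) < a ^ 2 + c ^ 2 := by positivity
  set F : ℝ → ℝ := fun t => Real.exp (-a * t) * (-a * Real.cos (c * t) + c * Real.sin (c * t)) / (a ^ 2 + c ^ 2) with hF
  have hderiv : ∀ t : ℝ, HasDerivAt F (Real.exp (-a * t) * Real.cos (c * t)) t := by
    intro t
    have h1 : HasDerivAt (fun t : ℝ => Real.exp (-a * t)) (-a * Real.exp (-a * t)) t := by
      simpa [mul_comm] using (((hasDerivAt_id t).const_mul (-a)).exp)
    have h2 : HasDerivAt (fun t : ℝ => Real.cos (c * t)) (-Real.sin (c * t) * c) t := by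
      simpa using (((hasDerivAt_id t).const_mul c).cos)
    have h3 : HasDerivAt (fun t : ℝ => Real.sin (c * t)) (Real.cos (c * t) * c) t := by
      simpa using (((hasDerivAt_id t).const_mul c).sin)
    have := ((h1.mul ((h2.const_mul (-a)).add (h3.const_mul c))).div_const (a ^ 2 + c ^ 2))
    refine this.congr_deriv (Eq.symm ?_)
    simp only [Pi.add_apply]
    field_simp
    ring
  have hcos_int : IntegrableOn (fun t => Real.exp (-a * t) * Real.cos (c * t)) (Ioi (0:ℝ)) := by
    apply Integrable.mono (exp_neg_integrableOn_Ioi 0 ha)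
    · exact (Real.continuous_exp.comp (continuous_const.mul continuous_id)).mul
        (Real.continuous_cos.comp (continuous_const.mul continuous_id)) |>.aestronglyMeasurable
    · filter_upwards with t
      simp only [norm_mul, Real.norm_eq_abs, Real.abs_exp]
      exact mul_le_of_le_one_right (Real.exp_pos _).le (Real.abs_cos_le_one _)
  have htend : Tendsto F atTop (nhds 0) := by
    have hb : Tendsto (fun t : ℝ => Real.exp (-a * t) * (|a| + |c|) / (a ^ 2 + c ^ 2)) atTop (nhds 0) := by
      have : Tendsto (fun t : ℝ => Real.exp (-a * t)) atTop (nhds 0) := by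
        simpa using Real.tendsto_exp_comp_nhds_zero.mpr
          (Filter.Tendsto.const_mul_atTop_of_neg (neg_neg_iff_pos.mpr ha) tendsto_id)
      simpa using (this.mul_const (|a| + |c|)).div_const (a ^ 2 + c ^ 2)
    refine squeeze_zero_norm (fun t => ?_) hb
    rw [hF]
    simp only [Real.norm_eq_abs, abs_div]
    rw [abs_of_pos hd]
    gcongr
    rw [abs_mul, abs_exp]
    gcongr
    calc |(-a * Real.cos (c*t) + c * Real.sin (c*t))| ≤ |(-a * Real.cos (c*t))| + |c * Real.sin (c*t)| := abs_add_le _ _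
      _ ≤ |a| * 1 + |c| * 1 := by
          rw [abs_mul, abs_mul, abs_neg]
          gcongr
          exacts [abs_cos_le_one _, abs_sin_le_one _]
      _ = |a| + |c| := by ring
  have := integral_Ioi_of_hasDerivAt_of_tendsto' (f := F)
    (f' := fun t => Real.exp (-a * t) * Real.cos (c * t))
    (fun x _ => hderiv x) hcos_int htend
  rw [this, hF]
  simp
  field_simp

lemma aux_deriv (c : ℝ) (hc : 1 ≤ c) (x : ℝ) :
    HasDerivAt (fun x : ℝ => x + Real.arctan ((c-1) * Real.sin x * Real.cos x / (Real.cos x ^ 2 + c * Real.sin x ^ 2)))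
      (c / (Real.cos x ^ 2 + c ^ 2 * Real.sin x ^ 2)) x := by
  have hd : ∀ y : ℝ, 0 < Real.cos y ^ 2 + c * Real.sin y ^ 2 := by
    intro y
    nlinarith [Real.sin_sq_add_cos_sq y, sq_nonneg (Real.sin y), sq_nonneg (Real.cos y)]
  have hn : HasDerivAt (fun x : ℝ => (c-1) * Real.sin x * Real.cos x)
      ((c-1) * (Real.cos x ^ 2 - Real.sin x ^ 2)) x := by
    have := (((Real.hasDerivAt_sin x).const_mul (c-1)).mul (Real.hasDerivAt_cos x))
    refine this.congr_deriv (Eq.symm ?_); ring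
  have hD : HasDerivAt (fun x : ℝ => Real.cos x ^ 2 + c * Real.sin x ^ 2)
      (2 * (c-1) * Real.sin x * Real.cos x) x := by
    have h1 := (Real.hasDerivAt_cos x).pow 2
    have h2 := ((Real.hasDerivAt_sin x).pow 2).const_mul c
    refine (h1.add h2).congr_deriv (Eq.symm ?_); ring
  have hg := (hn.div hD (hd x).ne')
  have harc := hg.arctan
  have := (hasDerivAt_id x).add harc
  refine this.congr_deriv (Eq.symm ?_)
  have hpy := Real.sin_sq_add_cos_sq x
  have hd2 : (0:ℝ) < Real.cos x ^ 2 + c ^ 2 * Real.sin x ^ 2 := by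
    nlinarith [sq_nonneg (Real.sin x), sq_nonneg (Real.cos x), sq_nonneg (c * Real.sin x)]
  set S := Real.sin x
  set C := Real.cos x
  have h1 : (Real.cos x ^ 2 + c * Real.sin x ^ 2) ≠ 0 := (hd x).ne'
  have h3 : 1 + ((c-1) * S * C / (C ^ 2 + c * S ^ 2)) ^ 2 ≠ 0 := by positivity
  have h1' : C ^ 2 + c * S ^ 2 ≠ 0 := h1
  have hN : 1 + ((c-1) * S * C / (C ^ 2 + c * S ^ 2)) ^ 2 = (C ^ 2 + c ^ 2 * S ^ 2) / (C ^ 2 + c * S ^ 2) ^ 2 := by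
    rw [div_pow, one_add_div (pow_ne_zero 2 h1'), div_left_inj' (pow_ne_zero 2 h1')]
    linear_combination (C ^ 2 + c ^ 2 * S ^ 2) * hpy
  have key : c / (C ^ 2 + c ^ 2 * S ^ 2) = 1 + 1 / (1 + ((c-1) * S * C / (C ^ 2 + c * S ^ 2)) ^ 2) * (((c - 1) * (C ^ 2 - S ^ 2) * (C ^ 2 + c * S ^ 2) - (c - 1) * S * C * (2 * (c - 1) * S * C)) / (C ^ 2 + c * S ^ 2) ^ 2) := by
    rw [hN, one_div_div, div_mul_div_comm, mul_comm ((C ^ 2 + c * S ^ 2) ^ 2), mul_div_mul_right _ _ (pow_ne_zero 2 h1'), one_add_div hd2.ne', div_left_inj' hd2.ne']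
    linear_combination (-c - (c-1) * (C ^ 2 - c * S ^ 2)) * hpy
  exact key

lemma trig_integral (a b : ℝ) (ha : 0 < a) (hb : 0 < b) :
    ∫ x in (0:ℝ)..π, a / (a ^ 2 + b ^ 2 * Real.sin x ^ 2) = π / Real.sqrt (a ^ 2 + b ^ 2) := by
  set s := Real.sqrt (a ^ 2 + b ^ 2) with hs_def
  have hs2 : s ^ 2 = a ^ 2 + b ^ 2 := Real.sq_sqrt (by positivity)
  have hs : 0 < s := Real.sqrt_pos.mpr (by positivity)
  set c := s / a with hc_def
  have hc : 1 ≤ c := by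
    rw [hc_def, le_div_iff₀ ha, one_mul]
    nlinarith [hs2, sq_nonneg b]
  have hF : ∀ x : ℝ, HasDerivAt
      (fun x : ℝ => (1/s) * (x + Real.arctan ((c-1) * Real.sin x * Real.cos x / (Real.cos x ^ 2 + c * Real.sin x ^ 2))))
      (a / (a ^ 2 + b ^ 2 * Real.sin x ^ 2)) x := by
    intro x
    have := (aux_deriv c hc x).const_mul (1/s)
    refine this.congr_deriv (Eq.symm ?_)
    have hpy := Real.sin_sq_add_cos_sq x
    have h1 : a ^ 2 + b ^ 2 * Real.sin x ^ 2 > 0 := by positivity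
    have h2 : Real.cos x ^ 2 + c ^ 2 * Real.sin x ^ 2 > 0 := by
      nlinarith [sq_nonneg (Real.cos x), sq_nonneg (c * Real.sin x)]
    have h3 : (0:ℝ) < Real.cos x ^ 2 * a ^ 2 + s ^ 2 * Real.sin x ^ 2 := by
      nlinarith [sq_nonneg (Real.cos x * a), sq_nonneg (s * Real.sin x), hpy]
    rw [hc_def]
    field_simp
    rw [eq_div_iff (ne_of_gt (by linarith [h3] : (0:ℝ) < a ^ 2 * Real.cos x ^ 2 + Real.sin x ^ 2 * s ^ 2)), one_mul]
    linear_combination Real.sin x ^ 2 * hs2 + a ^ 2 * hpy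
  have hcont : Continuous (fun x : ℝ => a / (a ^ 2 + b ^ 2 * Real.sin x ^ 2)) := by
    apply continuous_const.div (by continuity)
    intro x; positivity
  rw [intervalIntegral.integral_eq_sub_of_hasDerivAt (fun x _ => hF x) (hcont.intervalIntegrable 0 π)]
  simp [Real.sin_pi, Real.arctan_zero]
  field_simp


lemma wallis_prod (m : ℕ) : ∏ i ∈ Finset.range m, ((2*(i:ℝ)+1)/(2*i+2))
    = (2*m).factorial / (4 ^ m * (m.factorial : ℝ) ^ 2) := by
  induction m with
  | zero => simp
  | succ k ih =>
    rw [Finset.prod_range_succ, ih]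
    have h1 : ((2*(k+1)).factorial : ℝ) = (2*k+2) * ((2*k+1) * (2*k).factorial) := by
      have : 2*(k+1) = (2*k+1) + 1 := by ring
      rw [this, Nat.factorial_succ]
      push_cast [Nat.factorial_succ]
      ring
    have h2 : ((k+1).factorial : ℝ) = (k+1) * k.factorial := by
      rw [Nat.factorial_succ]; push_cast; ring
    have hk : (0:ℝ) < (k.factorial : ℝ) := by positivity
    rw [h1, h2]
    have h3 : (2*(k:ℝ)+2) ≠ 0 := by positivity
    field_simp
    ring
  
lemma besselJ0_cos_rep (y : ℝ) :
    ∫ x in (0:ℝ)..π, Real.cos (y * Real.sin x) = π * besselJ0 y := by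
  set F : ℕ → ℝ → ℝ := fun m x => (-1) ^ m * (y * Real.sin x) ^ (2 * m) / ((2 * m).factorial : ℝ) with hFdef
  set μ := volume.restrict (Ioc (0:ℝ) π) with hμ
  have hcont : ∀ m, Continuous (F m) := by
    intro m; rw [hFdef]; fun_prop
  have h_int : ∀ m, Integrable (F m) μ := fun m => (hcont m).integrableOn_Ioc
  have hmeas : (μ univ).toReal = π := by
    rw [hμ]; simp [Real.pi_pos.le]
  have hbound : ∀ m, ∫ x, ‖F m x‖ ∂μ ≤ (|y| ^ 2) ^ m / ((2*m).factorial : ℝ) * π := by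
    intro m
    have hb : ∀ x, ‖‖F m x‖‖ ≤ (|y| ^ 2) ^ m / ((2*m).factorial : ℝ) := by
      intro x
      rw [norm_norm, hFdef]
      simp only [norm_div, norm_mul, norm_pow, norm_neg, norm_one, one_pow, one_mul,
        Real.norm_eq_abs]
      rw [abs_of_nonneg (by positivity : (0:ℝ) ≤ ((2*m).factorial : ℝ))]
      gcongr
      calc (|y| * |Real.sin x|) ^ (2*m) ≤ (|y| * 1) ^ (2*m) := by
            gcongr
            exact Real.abs_sin_le_one x
        _ = (|y| ^ 2) ^ m := by rw [mul_one, ← pow_mul]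
    calc ∫ x, ‖F m x‖ ∂μ = ‖∫ x, ‖F m x‖ ∂μ‖ := by
          rw [Real.norm_eq_abs, abs_of_nonneg (integral_nonneg fun x => norm_nonneg _)]
      _ ≤ (|y| ^ 2) ^ m / ((2*m).factorial : ℝ) * (μ univ).toReal :=
          norm_integral_le_of_norm_le_const (Eventually.of_forall hb)
      _ = (|y| ^ 2) ^ m / ((2*m).factorial : ℝ) * π := by rw [hmeas]
  have h_sum : Summable fun m => ∫ x, ‖F m x‖ ∂μ := by
    apply Summable.of_nonneg_of_le (fun m => integral_nonneg fun x => norm_nonneg _) hbound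
    apply Summable.mul_right
    apply Summable.of_nonneg_of_le (fun m => by positivity)
      (fun m => ?_) (Real.summable_pow_div_factorial (|y| ^ 2))
    refine div_le_div_of_nonneg_left (by positivity) (by positivity) ?_
    exact_mod_cast Nat.factorial_le (by omega)
  have hswap := MeasureTheory.integral_tsum_of_summable_integral_norm h_int h_sum
  have hcoseq : ∀ x : ℝ, (∑' m, F m x) = Real.cos (y * Real.sin x) := fun x =>
    (Real.hasSum_cos (y * Real.sin x)).tsum_eq
  have hterm : ∀ m, ∫ x, F m x ∂μ = π * ((-1) ^ m / ((m.factorial : ℝ) * (m.factorial : ℝ)) * (y / 2) ^ (2 * m)) := by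
    intro m
    have : ∫ x, F m x ∂μ = ∫ x in (0:ℝ)..π, F m x := by
      rw [intervalIntegral.integral_of_le Real.pi_pos.le, hμ]
    rw [this]
    have : ∀ x, F m x = ((-1) ^ m * y ^ (2*m) / ((2*m).factorial : ℝ)) * Real.sin x ^ (2*m) := by
      intro x; simp only [hFdef]; rw [mul_pow]; ring
    rw [intervalIntegral.integral_congr (fun x _ => this x), intervalIntegral.integral_const_mul,
      integral_sin_pow_even, wallis_prod]
    have h4 : (0:ℝ) < ((2*m).factorial : ℝ) := by positivity
    have h5 : (0:ℝ) < (m.factorial : ℝ) := by positivity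
    have h6 : ((2:ℝ)) ^ (2*m) = 4 ^ m := by rw [pow_mul]; norm_num
    rw [div_pow, h6]
    field_simp
  calc ∫ x in (0:ℝ)..π, Real.cos (y * Real.sin x)
      = ∫ x, Real.cos (y * Real.sin x) ∂μ := by
        rw [intervalIntegral.integral_of_le Real.pi_pos.le, hμ]
    _ = ∫ x, (∑' m, F m x) ∂μ := by
        congr 1; ext x; rw [hcoseq]
    _ = ∑' m, ∫ x, F m x ∂μ := hswap.symm
    _ = ∑' m, π * ((-1) ^ m / ((m.factorial : ℝ) * (m.factorial : ℝ)) * (y / 2) ^ (2 * m)) := by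
        congr 1; ext m; exact hterm m
    _ = π * besselJ0 y := by
        rw [besselJ0, ← tsum_mul_left]
        congr 1; ext m
        rw [Real.Gamma_nat_eq_factorial]

theorem lipschitz_integral (a b : ℝ) (ha : 0 < a) (hb : 0 < b) :
    ∫ t in Set.Ioi (0:ℝ), Real.exp (-a * t) * besselJ0 (b * t)
      = 1 / Real.sqrt (a ^ 2 + b ^ 2) := by
  have hπ := Real.pi_pos
  set g : ℝ → ℝ → ℝ := fun t x => Real.exp (-a * t) * Real.cos (b * Real.sin x * t) with hg
  have hgcont : Continuous (Function.uncurry g) := by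
    rw [hg]; fun_prop
  set ν := (volume.restrict (Ioi (0:ℝ))).prod (volume.restrict (Ioc (0:ℝ) π)) with hν
  have hint : Integrable (Function.uncurry g) ν := by
    have hbound : Integrable (fun z : ℝ × ℝ => Real.exp (-a * z.1) * (1:ℝ)) ν :=
      (exp_neg_integrableOn_Ioi 0 ha).mul_prod (integrable_const 1)
    apply hbound.mono hgcont.aestronglyMeasurable
    filter_upwards with z
    rw [hg]
    simp only [Function.uncurry, norm_mul, Real.norm_eq_abs, Real.abs_exp, mul_one,
      abs_exp]
    exact mul_le_of_le_one_right (Real.exp_pos _).le (Real.abs_cos_le_one _)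
  have step1 : ∀ t : ℝ, Real.exp (-a * t) * besselJ0 (b * t)
      = (1/π) * ∫ x in Ioc (0:ℝ) π, g t x := by
    intro t
    have h1 : besselJ0 (b * t) = (1/π) * ∫ x in (0:ℝ)..π, Real.cos (b * t * Real.sin x) := by
      rw [besselJ0_cos_rep (b * t)]
      field_simp
    have h2 : ∫ x in Ioc (0:ℝ) π, g t x
        = Real.exp (-a*t) * ∫ x in (0:ℝ)..π, Real.cos (b * t * Real.sin x) := by
      rw [← intervalIntegral.integral_const_mul, ← intervalIntegral.integral_of_le Real.pi_pos.le]
      apply intervalIntegral.integral_congr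
      intro x _
      simp only [hg]
      ring_nf
    rw [h1, h2]
    ring
  calc ∫ t in Set.Ioi (0:ℝ), Real.exp (-a * t) * besselJ0 (b * t)
      = ∫ t in Set.Ioi (0:ℝ), (1/π) * ∫ x in Ioc (0:ℝ) π, g t x := by
        exact setIntegral_congr_fun measurableSet_Ioi fun t _ => step1 t
    _ = (1/π) * ∫ t in Set.Ioi (0:ℝ), ∫ x in Ioc (0:ℝ) π, g t x := by
        rw [integral_const_mul]
    _ = (1/π) * ∫ x in Ioc (0:ℝ) π, ∫ t in Set.Ioi (0:ℝ), g t x := by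
        rw [integral_integral_swap hint]
    _ = (1/π) * ∫ x in Ioc (0:ℝ) π, a / (a ^ 2 + b ^ 2 * Real.sin x ^ 2) := by
        congr 1
        apply setIntegral_congr_fun measurableSet_Ioc
        intro x _
        rw [hg]
        have := laplace_cos a (b * Real.sin x) ha
        simp only at this ⊢
        rw [this, mul_pow]
    _ = (1/π) * ∫ x in (0:ℝ)..π, a / (a ^ 2 + b ^ 2 * Real.sin x ^ 2) := by
        rw [intervalIntegral.integral_of_le Real.pi_pos.le]
    _ = (1/π) * (π / Real.sqrt (a ^ 2 + b ^ 2)) := by rw [trig_integral a b ha hb]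
    _ = 1 / Real.sqrt (a ^ 2 + b ^ 2) := by field_simp
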